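/- Let P₁,…,P₅ be five distinct points of ℙ¹(ℂ)×ℙ¹(ℂ) in general position. Then the complex vector space of bihomogeneous forms of bidegree (1,2) vanishing at all five points has dimension exactly 1. -/
import Mathlib


open MvPolynomial
open scoped Classical

noncomputable section

/-- The projective line over `ℂ`. -/
abbrev P1C := Projectivization ℂ (Fin 2 → ℂ)
/-- The projective plane over `ℂ`. -/
abbrev P2C := Projectivization ℂ (Fin 3 → ℂ)
/-- Projective 3-space over `ℂ`. -/
abbrev P3C := Projectivization ℂ (Fin 4 → ℂ)

/-- The quadratic form `δ = z² − 4xy` defining the conic `Δ`. -/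
def δpoly : MvPolynomial (Fin 3) ℂ := X 2 ^ 2 - 4 * X 0 * X 1

/-- `P` is a singular point of the plane curve `{γ = 0}`. -/
def SingAt (γ : MvPolynomial (Fin 3) ℂ) (P : P2C) : Prop :=
  eval P.rep γ = 0 ∧ ∀ i : Fin 3, eval P.rep (pderiv i γ) = 0

/-- `P` is a node of the plane curve `{γ = 0}`. -/
def NodeAt (γ : MvPolynomial (Fin 3) ℂ) (P : P2C) : Prop :=
  SingAt γ P ∧
    (Matrix.of fun i j : Fin 3 => eval P.rep (pderiv i (pderiv j γ))).rank = 2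

/-- `{γ = 0}` is a nodal plane curve. -/
def NodalCurve (γ : MvPolynomial (Fin 3) ℂ) : Prop :=
  Squarefree γ ∧ ∀ P : P2C, SingAt γ P → NodeAt γ P

/-- Restriction of a ternary form to the conic `Δ`, via `(s:t) ↦ (s² : t² : 2st)`. -/
def restrictΔ (f : MvPolynomial (Fin 3) ℂ) : MvPolynomial (Fin 2) ℂ :=
  aeval (fun j => (![X 0 ^ 2, X 1 ^ 2, 2 * X 0 * X 1] : Fin 3 → MvPolynomial (Fin 2) ℂ) j) f

/-- `Δ` is a simple contact conic of the degree-`d` curve `{γ = 0}`. -/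
def SimpleContact (γ : MvPolynomial (Fin 3) ℂ) (d : ℕ) : Prop :=
  (∀ P : P2C, eval P.rep γ = 0 → eval P.rep δpoly = 0 → ¬ SingAt γ P) ∧
  ∃ (c : ℂ) (h : MvPolynomial (Fin 2) ℂ),
    c ≠ 0 ∧ Squarefree h ∧ h.IsHomogeneous d ∧ restrictΔ γ = C c * h ^ 2

/-- The covering map `ℙ¹×ℙ¹ → ℙ²` on representatives. -/
def πvec (a b : Fin 2 → ℂ) : Fin 3 → ℂ := ![a 0 * b 0, a 1 * b 1, a 0 * b 1 + a 1 * b 0]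

lemma vec2_eq_zero {x : Fin 2 → ℂ} (h0 : x 0 = 0) (h1 : x 1 = 0) : x = 0 := by
  ext i
  fin_cases i
  · simpa using h0
  · simpa using h1

lemma πvec_ne_zero {a b : Fin 2 → ℂ} (ha : a ≠ 0) (hb : b ≠ 0) : πvec a b ≠ 0 := by
  intro h
  have h0 : a 0 * b 0 = 0 := by simpa [πvec] using congrFun h 0
  have h1 : a 1 * b 1 = 0 := by simpa [πvec] using congrFun h 1
  have h2 : a 0 * b 1 + a 1 * b 0 = 0 := by simpa [πvec] using congrFun h 2
  by_cases ha0 : a 0 = 0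
  · have ha1 : a 1 ≠ 0 := fun h' => ha (vec2_eq_zero ha0 h')
    have hb1 : b 1 = 0 := by
      rcases mul_eq_zero.mp h1 with h' | h'
      · exact absurd h' ha1
      · exact h'
    have hb0 : b 0 = 0 := by
      have hz : a 1 * b 0 = 0 := by simpa [ha0, hb1] using h2
      rcases mul_eq_zero.mp hz with h' | h'
      · exact absurd h' ha1
      · exact h'
    exact hb (vec2_eq_zero hb0 hb1)
  · have hb0 : b 0 = 0 := by
      rcases mul_eq_zero.mp h0 with h' | h'
      · exact absurd h' ha0
      · exact h'
    have hb1 : b 1 = 0 := by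
      have hz : a 0 * b 1 = 0 := by simpa [hb0] using h2
      rcases mul_eq_zero.mp hz with h' | h'
      · exact absurd h' ha0
      · exact h'
    exact hb (vec2_eq_zero hb0 hb1)

/-- The double cover `π : ℙ¹×ℙ¹ → ℙ²` branched along `Δ`,
`π((s:t),(u:v)) = (su : tv : sv + tu)`. -/
def πΔ (Q : P1C × P1C) : P2C :=
  Projectivization.mk ℂ (πvec Q.1.rep Q.2.rep)
    (πvec_ne_zero Q.1.rep_nonzero Q.2.rep_nonzero)

/-- The weights giving the bigrading on `ℂ[s,t,u,v]`. -/
def biwt : Fin 4 → ℕ × ℕ := ![(1,0),(1,0),(0,1),(0,1)]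

/-- `p ∈ ℂ[s,t,u,v]` is bihomogeneous of bidegree `(a,b)`. -/
def Bihom (p : MvPolynomial (Fin 4) ℂ) (a b : ℕ) : Prop :=
  IsWeightedHomogeneous biwt p (a, b)

/-- The permutation of the variables `s,t,u,v` realizing the swap `(s,t) ↔ (u,v)`. -/
def swapPerm : Equiv.Perm (Fin 4) := (Equiv.swap 0 2).trans (Equiv.swap 1 3)

/-- `p(u,v,s,t)`, the polynomial `p` composed with the covering involution. -/
def swapPoly (p : MvPolynomial (Fin 4) ℂ) : MvPolynomial (Fin 4) ℂ :=
  rename swapPerm p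

/-- `γ(su, tv, sv + tu)`, the pull-back of a ternary form under `π`. -/
def pullΔ (γ : MvPolynomial (Fin 3) ℂ) : MvPolynomial (Fin 4) ℂ :=
  aeval (fun j => (![X 0 * X 2, X 1 * X 3, X 0 * X 3 + X 1 * X 2] :
    Fin 3 → MvPolynomial (Fin 4) ℂ) j) γ

/-- `γ` splits with type `(m,n)` with respect to `Δ`. -/
def SplitsType (γ : MvPolynomial (Fin 3) ℂ) (m n : ℕ) : Prop :=
  ∃ dp : MvPolynomial (Fin 4) ℂ,
    dp ≠ 0 ∧ Bihom dp m n ∧ pullΔ γ = dp * swapPoly dp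

/-- `{l = 0}` is a line tangent to `Δ`:
up to a nonzero scalar, `l = b²x + a²y − ab·z` with `(a,b) ≠ (0,0)`. -/
def TangentToΔ (l : MvPolynomial (Fin 3) ℂ) : Prop :=
  ∃ c a b : ℂ, c ≠ 0 ∧ (a ≠ 0 ∨ b ≠ 0) ∧
    l = C c * (C (b ^ 2) * X 0 + C (a ^ 2) * X 1 - C (a * b) * X 2)

/-- The line `{l = 0}` is transversal to `{γ = 0}`: for a linear parameterization
of the line, the restricted binary form is squarefree. -/
def TransversalTo (γ l : MvPolynomial (Fin 3) ℂ) : Prop :=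
  ∃ p q : Fin 3 → ℂ, LinearIndependent ℂ ![p, q] ∧ eval p l = 0 ∧ eval q l = 0 ∧
    Squarefree (aeval (fun j => (fun j => C (p j) * X 0 + C (q j) * X 1 :
      Fin 3 → MvPolynomial (Fin 2) ℂ) j) γ)

/-- The representative in `ℂ⁴` of a point of `ℙ¹×ℙ¹`. -/
def pairRep (Q : P1C × P1C) : Fin 4 → ℂ :=
  ![Q.1.rep 0, Q.1.rep 1, Q.2.rep 0, Q.2.rep 1]

/-- Evaluation of `p ∈ ℂ[s,t,u,v]` at (a representative of) a point of `ℙ¹×ℙ¹`. -/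
def evalPair (p : MvPolynomial (Fin 4) ℂ) (Q : P1C × P1C) : ℂ := eval (pairRep Q) p

/-- `Z = {Q ∈ ℙ¹×ℙ¹ : d⁺(Q) = 0 and d⁺(σ(Q)) = 0}`. -/
def Zset (dp : MvPolynomial (Fin 4) ℂ) : Set (P1C × P1C) :=
  {Q | evalPair dp Q = 0 ∧ evalPair dp Q.swap = 0}

/-- Evaluation at a vector, as a linear map. -/
def evalLin {k : ℕ} (v : Fin k → ℂ) : MvPolynomial (Fin k) ℂ →ₗ[ℂ] ℂ :=
  (aeval v).toLinearMap

/-- The space of degree-`d` forms in `k` variables vanishing on a set `S` of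
projective points. -/
def homVanish (k d : ℕ) (S : Set (Projectivization ℂ (Fin k → ℂ))) :
    Submodule ℂ (MvPolynomial (Fin k) ℂ) :=
  homogeneousSubmodule (Fin k) ℂ d ⊓ ⨅ P ∈ S, LinearMap.ker (evalLin P.rep)

/-- The space of bidegree-`(a,b)` forms vanishing on a set `S ⊆ ℙ¹×ℙ¹`. -/
def biVanish (a b : ℕ) (S : Set (P1C × P1C)) : Submodule ℂ (MvPolynomial (Fin 4) ℂ) :=
  weightedHomogeneousSubmodule ℂ biwt (a, b) ⊓ ⨅ Q ∈ S, LinearMap.ker (evalLin (pairRep Q))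

/-- `r` points of `ℙ¹×ℙ¹` are in general position. -/
def GenPosP1P1 {r : ℕ} (P : Fin r → P1C × P1C) : Prop :=
  Function.Injective P ∧
  (∀ Q : P1C, {i : Fin r | (P i).1 = Q}.ncard ≤ 2) ∧
  (∀ Q : P1C, {i : Fin r | (P i).2 = Q}.ncard ≤ 2) ∧
  ∀ p : MvPolynomial (Fin 4) ℂ, p ≠ 0 → Bihom p 1 1 →
    ∀ S : Finset (Fin r), S.card = 5 → ¬ ∀ i ∈ S, evalPair p (P i) = 0

/-- `P` is a singular point of the surface `{F = 0} ⊆ ℙ³`. -/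
def SingAt4 (F : MvPolynomial (Fin 4) ℂ) (P : P3C) : Prop :=
  eval P.rep F = 0 ∧ ∀ i : Fin 4, eval P.rep (pderiv i F) = 0

/-- `P` is a node of the surface `{F = 0} ⊆ ℙ³`. -/
def NodeAt4 (F : MvPolynomial (Fin 4) ℂ) (P : P3C) : Prop :=
  SingAt4 F P ∧
    (Matrix.of fun i j : Fin 4 => eval P.rep (pderiv i (pderiv j F))).rank = 3

/-- `{F = 0}` is a nodal quartic surface in `ℙ³`. -/
def NodalQuartic (F : MvPolynomial (Fin 4) ℂ) : Prop :=
  F.IsHomogeneous 4 ∧ Squarefree F ∧ ∀ P : P3C, SingAt4 F P → NodeAt4 F P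

/-- `r` points of `ℙ³` are in general position: no three collinear, no five on a
common hyperplane. -/
def GenPosP3 {r : ℕ} (P : Fin r → P3C) : Prop :=
  Function.Injective P ∧
  (∀ i j k : Fin r, i ≠ j → i ≠ k → j ≠ k →
    LinearIndependent ℂ ![(P i).rep, (P j).rep, (P k).rep]) ∧
  ∀ φ : (Fin 4 → ℂ) →ₗ[ℂ] ℂ, φ ≠ 0 →
    ∀ S : Finset (Fin r), S.card = 5 → ¬ ∀ i ∈ S, φ (P i).rep = 0

/-- The inclusion `ℂ[x,y,z] → ℂ[x,y,z,w]`. -/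
def liftP (f : MvPolynomial (Fin 3) ℂ) : MvPolynomial (Fin 4) ℂ :=
  rename Fin.castSucc f

lemma e3_ne_zero : (![0,0,0,1] : Fin 4 → ℂ) ≠ 0 := by
  intro h
  simpa using congrFun h 3

/-- The point `P₀ = (0:0:0:1) ∈ ℙ³`. -/
def P0 : P3C := Projectivization.mk ℂ ![0,0,0,1] e3_ne_zero

/-- The surface `{F = 0}` contains no projective line through `P`. -/
def NoLineThrough (F : MvPolynomial (Fin 4) ℂ) (P : P3C) : Prop :=
  ¬ ∃ v : Fin 4 → ℂ, LinearIndependent ℂ ![P.rep, v] ∧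
      ∀ a b : ℂ, eval (a • P.rep + b • v) F = 0

/-- Forget the last coordinate of (a representative of) a point of `ℙ³`. -/
def dropW (Q : P3C) : Fin 3 → ℂ := fun j => Q.rep j.castSucc

lemma e100_ne_zero : (![1,0,0] : Fin 3 → ℂ) ≠ 0 := by
  intro h
  simpa using congrFun h 0

/-- The projection `ℙ³ ∖ {(0:0:0:1)} → ℙ²`, `(x:y:z:w) ↦ (x:y:z)`
(with junk value at `(0:0:0:1)`). -/
def projP0 (Q : P3C) : P2C :=
  if h : dropW Q ≠ 0 then Projectivization.mk ℂ (dropW Q) h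
  else Projectivization.mk ℂ ![1,0,0] e100_ne_zero

end

noncomputable section Aux

def expo (ε : Fin 2) (j : Fin 3) : Fin 4 →₀ ℕ :=
  Finsupp.equivFunOnFinite.symm
    ![if ε = 0 then 1 else 0, if ε = 1 then 1 else 0, 2 - (j:ℕ), (j:ℕ)]

lemma expo_apply (ε : Fin 2) (j : Fin 3) (i : Fin 4) :
    expo ε j i = ![if ε = 0 then 1 else 0, if ε = 1 then 1 else 0, 2 - (j:ℕ), (j:ℕ)] i := rfl

lemma weight_expo (ε : Fin 2) (j : Fin 3) :
    Finsupp.weight biwt (expo ε j) = ((1:ℕ), (2:ℕ)) := by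
  rw [Finsupp.weight_apply, Finsupp.sum_fintype _ _ (fun i => by simp)]
  fin_cases ε <;> fin_cases j <;>
    simp [Fin.sum_univ_four, expo_apply, biwt, Prod.ext_iff]

lemma expo_classify {d : Fin 4 →₀ ℕ} (hd : Finsupp.weight biwt d = ((1:ℕ), (2:ℕ))) :
    ∃ ε j, d = expo ε j := by
  rw [Finsupp.weight_apply, Finsupp.sum_fintype _ _ (fun i => by simp)] at hd
  rw [Fin.sum_univ_four] at hd
  simp only [biwt, Prod.ext_iff, Prod.fst_add, Prod.snd_add, Prod.smul_mk, smul_eq_mul,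
    Matrix.cons_val_zero, Matrix.cons_val_one, Matrix.head_cons, Matrix.cons_val_two,
    Matrix.tail_cons, Matrix.cons_val_three, mul_one, mul_zero, add_zero, zero_add] at hd
  obtain ⟨h1, h2⟩ := hd
  have h3 : d 3 < 3 := by omega
  refine ⟨if d 0 = 1 then 0 else 1, ⟨d 3, h3⟩, ?_⟩
  ext i
  fin_cases i <;> simp [expo_apply] <;> first | omega | (split_ifs <;> omega)

lemma expo_injective : Function.Injective (fun x : Fin 2 × Fin 3 => expo x.1 x.2) := by
  rintro ⟨ε, j⟩ ⟨ε', j'⟩ h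
  simp only at h
  have h0 := DFunLike.congr_fun h 0
  have h3 := DFunLike.congr_fun h 3
  rw [expo_apply, expo_apply] at h0
  rw [expo_apply, expo_apply] at h3
  simp at h0 h3
  ext
  · fin_cases ε <;> fin_cases ε' <;> simp_all
  · exact h3


def Φmap : (Fin 2 × Fin 3 → ℂ) →ₗ[ℂ] MvPolynomial (Fin 4) ℂ where
  toFun c := ∑ x : Fin 2 × Fin 3, monomial (expo x.1 x.2) (c x)
  map_add' a b := by simp [map_add, Finset.sum_add_distrib]
  map_smul' r a := by simp [Finset.smul_sum, MvPolynomial.smul_monomial]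

lemma coeff_Φmap (c : Fin 2 × Fin 3 → ℂ) (x : Fin 2 × Fin 3) :
    coeff (expo x.1 x.2) (Φmap c) = c x := by
  simp only [Φmap, LinearMap.coe_mk, AddHom.coe_mk, MvPolynomial.coeff_sum, coeff_monomial]
  rw [Finset.sum_eq_single x]
  · simp
  · intro y _ hyx
    rw [if_neg]
    exact fun h => hyx (expo_injective h)
  · simp

def W12 : Submodule ℂ (MvPolynomial (Fin 4) ℂ) :=
  weightedHomogeneousSubmodule ℂ biwt ((1:ℕ), (2:ℕ))

lemma Φmap_mem (c : Fin 2 × Fin 3 → ℂ) : Φmap c ∈ W12 := by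
  show ∑ x : Fin 2 × Fin 3, monomial (expo x.1 x.2) (c x) ∈ W12
  apply Submodule.sum_mem
  intro x _
  exact isWeightedHomogeneous_monomial _ _ _ (weight_expo x.1 x.2)

lemma Φmap_surj {p : MvPolynomial (Fin 4) ℂ} (hp : p ∈ W12) :
    Φmap (fun x => coeff (expo x.1 x.2) p) = p := by
  have hW : IsWeightedHomogeneous biwt p ((1:ℕ), (2:ℕ)) := hp
  show ∑ x : Fin 2 × Fin 3, monomial (expo x.1 x.2) (coeff (expo x.1 x.2) p) = p
  have himg := Finset.sum_image (s := (Finset.univ : Finset (Fin 2 × Fin 3)))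
      (f := fun d => (monomial d) (coeff d p))
      (g := fun x : Fin 2 × Fin 3 => expo x.1 x.2)
      (fun x _ y _ h => expo_injective h)
  rw [← himg]
  conv_rhs => rw [← support_sum_monomial_coeff p]
  apply (Finset.sum_subset ?_ ?_).symm
  · intro d hd
    obtain ⟨ε, j, rfl⟩ := expo_classify (hW (mem_support_iff.mp hd))
    exact Finset.mem_image.2 ⟨(ε, j), Finset.mem_univ _, rfl⟩
  · intro d _ hd
    rw [notMem_support_iff.mp hd, map_zero]

def Φres : (Fin 2 × Fin 3 → ℂ) →ₗ[ℂ] ↥W12 := Φmap.codRestrict W12 Φmap_mem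

lemma Φres_bij : Function.Bijective Φres := by
  constructor
  · intro c c' h
    funext x
    have := congrArg (coeff (expo x.1 x.2)) (congrArg Subtype.val h)
    simpa [Φres, coeff_Φmap] using this
  · rintro ⟨p, hp⟩
    exact ⟨fun x => coeff (expo x.1 x.2) p, Subtype.ext (Φmap_surj hp)⟩

def Φequiv : (Fin 2 × Fin 3 → ℂ) ≃ₗ[ℂ] ↥W12 := LinearEquiv.ofBijective Φres Φres_bij

instance : FiniteDimensional ℂ ↥W12 := Module.Finite.equiv Φequiv

lemma finrank_W12 : Module.finrank ℂ ↥W12 = 6 := by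
  rw [← Φequiv.finrank_eq]
  simp



/-- Row vector entries: evaluation of basis monomials at a point of ℙ¹×ℙ¹. -/
def rowv (Q : P1C × P1C) (ε : Fin 2) (j : Fin 3) : ℂ :=
  Q.1.rep ε * (Q.2.rep 0 ^ (2 - (j:ℕ)) * Q.2.rep 1 ^ (j:ℕ))

lemma pairRep_apply (Q : P1C × P1C) :
    pairRep Q = ![Q.1.rep 0, Q.1.rep 1, Q.2.rep 0, Q.2.rep 1] := rfl

lemma eval_expo_monomial (Q : P1C × P1C) (ε : Fin 2) (j : Fin 3) :
    eval (pairRep Q) (monomial (expo ε j) (1:ℂ)) = rowv Q ε j := by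
  rw [eval_monomial, Finsupp.prod_pow]
  rw [Fin.prod_univ_four]
  fin_cases ε <;>
    (simp [expo_apply, pairRep_apply, rowv]; ring)

lemma aeval_eq_eval (v : Fin 4 → ℂ) (p : MvPolynomial (Fin 4) ℂ) :
    aeval v p = eval v p := by
  rw [aeval_def, Algebra.algebraMap_self]
  rfl

/-! ### The (1,1) step -/

def exp11 (x : Fin 2 × Fin 2) : Fin 4 →₀ ℕ :=
  Finsupp.equivFunOnFinite.symm
    ![if x.1 = 0 then 1 else 0, if x.1 = 1 then 1 else 0,
      if x.2 = 0 then 1 else 0, if x.2 = 1 then 1 else 0]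

lemma exp11_apply (x : Fin 2 × Fin 2) (i : Fin 4) :
    exp11 x i = ![if x.1 = 0 then 1 else 0, if x.1 = 1 then 1 else 0,
      if x.2 = 0 then 1 else 0, if x.2 = 1 then 1 else 0] i := rfl

lemma weight_exp11 (x : Fin 2 × Fin 2) :
    Finsupp.weight biwt (exp11 x) = ((1:ℕ), (1:ℕ)) := by
  rw [Finsupp.weight_apply, Finsupp.sum_fintype _ _ (fun i => by simp)]
  obtain ⟨ε, η⟩ := x
  fin_cases ε <;> fin_cases η <;>
    simp [Fin.sum_univ_four, exp11_apply, biwt, Prod.ext_iff]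

lemma exp11_injective : Function.Injective exp11 := by
  rintro ⟨ε, η⟩ ⟨ε', η'⟩ h
  have h0 := DFunLike.congr_fun h 0
  have h2 := DFunLike.congr_fun h 2
  rw [exp11_apply, exp11_apply] at h0
  rw [exp11_apply, exp11_apply] at h2
  simp only [Matrix.cons_val_zero, Matrix.cons_val_two, Matrix.tail_cons, Matrix.head_cons] at h0 h2
  ext
  · fin_cases ε <;> fin_cases ε' <;> simp_all
  · fin_cases η <;> fin_cases η' <;> simp_all

lemma eval_exp11_monomial (Q : P1C × P1C) (x : Fin 2 × Fin 2) (c : ℂ) :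
    eval (pairRep Q) (monomial (exp11 x) c) = c * (Q.1.rep x.1 * Q.2.rep x.2) := by
  rw [eval_monomial, Finsupp.prod_pow, Fin.prod_univ_four]
  obtain ⟨ε, η⟩ := x
  fin_cases ε <;> fin_cases η <;>
    simp [exp11_apply, pairRep_apply]

lemma span11 (P : Fin 5 → P1C × P1C) (hgen : GenPosP1P1 P) (c : Fin 2 × Fin 2 → ℂ)
    (hc : ∀ i, ∑ x : Fin 2 × Fin 2, c x * ((P i).1.rep x.1 * (P i).2.rep x.2) = 0) :
    c = 0 := by
  by_contra hne
  set p : MvPolynomial (Fin 4) ℂ := ∑ x : Fin 2 × Fin 2, monomial (exp11 x) (c x) with hpdef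
  have hcoeff : ∀ x, coeff (exp11 x) p = c x := by
    intro x
    rw [hpdef, MvPolynomial.coeff_sum]
    rw [Finset.sum_eq_single x]
    · simp [coeff_monomial]
    · intro y _ hyx
      rw [coeff_monomial, if_neg (fun h => hyx (exp11_injective h))]
    · simp
  have hp0 : p ≠ 0 := by
    obtain ⟨x, hx⟩ := Function.ne_iff.mp hne
    intro h
    apply hx
    rw [← hcoeff x, h]
    simp
  have hbh : Bihom p 1 1 := by
    have : p ∈ weightedHomogeneousSubmodule ℂ biwt ((1:ℕ),(1:ℕ)) := by
      rw [hpdef]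
      apply Submodule.sum_mem
      intro x _
      exact isWeightedHomogeneous_monomial _ _ _ (weight_exp11 x)
    exact this
  refine hgen.2.2.2 p hp0 hbh Finset.univ (by simp) ?_
  intro i _
  show eval (pairRep (P i)) p = 0
  rw [hpdef, map_sum]
  rw [← hc i]
  exact Finset.sum_congr rfl fun x _ => eval_exp11_monomial (P i) x (c x)

/-! ### The key independence lemma -/

def Tmap (w : Fin 5 → (Fin 2 × Fin 2 → ℂ)) : (Fin 5 → ℂ) →ₗ[ℂ] (Fin 2 × Fin 2 → ℂ) where
  toFun lam := ∑ i, lam i • w i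
  map_add' u v := by simp [add_smul, Finset.sum_add_distrib]
  map_smul' r u := by simp [Finset.smul_sum, smul_smul]

lemma Tmap_apply (w : Fin 5 → (Fin 2 × Fin 2 → ℂ)) (lam : Fin 5 → ℂ) (x : Fin 2 × Fin 2) :
    Tmap w lam x = ∑ i, lam i * w i x := by
  simp [Tmap, Finset.sum_apply]

lemma Tmap_single (w : Fin 5 → (Fin 2 × Fin 2 → ℂ)) (i : Fin 5) :
    Tmap w (Pi.single i 1) = w i := by
  funext x
  rw [Tmap_apply]
  rw [Finset.sum_eq_single i (fun k _ hk => by simp [Pi.single_apply, hk]) (by simp)]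
  simp

lemma lam_zero (P : Fin 5 → P1C × P1C) (hgen : GenPosP1P1 P) (lam : Fin 5 → ℂ)
    (H : ∀ (ε : Fin 2) (j : Fin 3), ∑ i, lam i * rowv (P i) ε j = 0) : lam = 0 := by
  classical
  have Hs : ∀ (ε m n : Fin 2),
      ∑ i, lam i * ((P i).1.rep ε * ((P i).2.rep m * (P i).2.rep n)) = 0 := by
    intro ε m n
    fin_cases m <;> fin_cases n
    · exact (Finset.sum_congr rfl fun i _ => by
        simp only [rowv, Fin.val_zero, Nat.sub_zero, pow_zero, mul_one, Fin.zero_eta, Fin.mk_one]; ring).trans (H ε 0)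
    · exact (Finset.sum_congr rfl fun i _ => by
        simp only [rowv, Fin.val_one, pow_one, Fin.zero_eta, Fin.mk_one]; ring).trans (H ε 1)
    · exact (Finset.sum_congr rfl fun i _ => by
        simp only [rowv, Fin.val_one, pow_one, Fin.zero_eta, Fin.mk_one]; ring).trans (H ε 1)
    · exact (Finset.sum_congr rfl fun i _ => by
        simp only [rowv, Fin.val_two, Nat.sub_self, pow_zero, one_mul, Fin.zero_eta, Fin.mk_one]; ring).trans (H ε 2)
  set w : Fin 5 → (Fin 2 × Fin 2 → ℂ) :=
    fun i x => (P i).1.rep x.1 * (P i).2.rep x.2 with hw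
  set T := Tmap w with hT
  have hrange : LinearMap.range T = ⊤ := by
    by_contra h
    obtain ⟨f, hf0, hbot⟩ :=
      Submodule.exists_dual_map_eq_bot_of_lt_top (lt_top_iff_ne_top.2 h) inferInstance
    have hfw : ∀ i, f (w i) = 0 := by
      intro i
      have hmem : w i ∈ LinearMap.range T := ⟨Pi.single i 1, Tmap_single w i⟩
      have h2 : f (w i) ∈ Submodule.map f (LinearMap.range T) :=
        Submodule.mem_map_of_mem hmem
      rw [hbot] at h2
      simpa using h2
    have harg : ∀ i, ∑ x : Fin 2 × Fin 2,
        (fun x : Fin 2 × Fin 2 => f (fun y => if x = y then 1 else 0)) x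
          * ((P i).1.rep x.1 * (P i).2.rep x.2) = 0 := by
      intro i
      have hfi := hfw i
      rw [LinearMap.pi_apply_eq_sum_univ f (w i)] at hfi
      refine Eq.trans (Finset.sum_congr rfl fun x _ => ?_) hfi
      simp only [hw, smul_eq_mul]
      ring
    have hc := span11 P hgen _ harg
    apply hf0
    apply LinearMap.ext
    intro y
    have hz : ∀ x : Fin 2 × Fin 2, f (fun j => if x = j then 1 else 0) = 0 :=
      fun x => congrFun hc x
    rw [LinearMap.pi_apply_eq_sum_univ f y]
    simp [hz]
  have hker : Module.finrank ℂ ↥(LinearMap.ker T) = 1 := by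
    have h5 := LinearMap.finrank_range_add_finrank_ker T
    rw [hrange, finrank_top] at h5
    have h4 : Module.finrank ℂ (Fin 2 × Fin 2 → ℂ) = 4 := by simp
    have h5' : Module.finrank ℂ (Fin 5 → ℂ) = 5 := by simp
    rw [h4, h5'] at h5
    omega
  have hmemker : ∀ η : Fin 2, (fun i => lam i * (P i).2.rep η) ∈ LinearMap.ker T := by
    intro η
    rw [LinearMap.mem_ker]
    funext x
    simp only [Pi.zero_apply]
    rw [hT, Tmap_apply]
    rw [← Hs x.1 x.2 η]
    refine Finset.sum_congr rfl fun i _ => ?_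
    simp only [hw]
    ring
  set lam0 : ↥(LinearMap.ker T) := ⟨fun i => lam i * (P i).2.rep 0, hmemker 0⟩ with hlam0
  set lam1 : ↥(LinearMap.ker T) := ⟨fun i => lam i * (P i).2.rep 1, hmemker 1⟩ with hlam1
  have hnli : ¬ LinearIndependent ℂ ![lam0, lam1] := by
    intro hli
    have hcard := hli.fintype_card_le_finrank
    rw [hker] at hcard
    simp at hcard
  rw [LinearIndependent.pair_iff] at hnli
  push_neg at hnli
  obtain ⟨α, β, hrel, hne⟩ := hnli
  have hrel' : ∀ i, lam i * (α * (P i).2.rep 0 + β * (P i).2.rep 1) = 0 := by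
    intro i
    have h := congrFun (congrArg Subtype.val hrel) i
    simp only [hlam0, hlam1, Submodule.coe_add, SetLike.val_smul, Pi.add_apply,
      Pi.smul_apply, smul_eq_mul, ZeroMemClass.coe_zero, Pi.zero_apply] at h
    linear_combination h
  have hαβ : ¬ (α = 0 ∧ β = 0) := fun ⟨h1, h2⟩ => hne h1 h2
  set v : Fin 2 → ℂ := ![β, -α] with hvdef
  have hv : v ≠ 0 := by
    intro h
    have h1 := congrFun h 0
    have h2 := congrFun h 1
    simp [hvdef] at h1 h2
    exact hαβ ⟨h2, h1⟩
  have hproj : ∀ k, lam k ≠ 0 → (P k).2 = Projectivization.mk ℂ v hv := by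
    intro k hk
    have hbk := (P k).2.rep_nonzero
    have hlin : α * (P k).2.rep 0 + β * (P k).2.rep 1 = 0 := by
      rcases mul_eq_zero.mp (hrel' k) with h | h
      · exact absurd h hk
      · exact h
    have hbtv : ∃ t : ℂ, (P k).2.rep = t • v := by
      by_cases hα : α = 0
      · have hβ : β ≠ 0 := fun h => hαβ ⟨hα, h⟩
        have hb1 : (P k).2.rep 1 = 0 := by
          have hz : β * (P k).2.rep 1 = 0 := by linear_combination hlin - (P k).2.rep 0 * hα
          rcases mul_eq_zero.mp hz with h | h
          · exact absurd h hβ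
          · exact h
        refine ⟨(P k).2.rep 0 / β, funext fun idx => ?_⟩
        fin_cases idx <;> simp [hvdef, hα, hb1] <;> field_simp
      · refine ⟨-((P k).2.rep 1) / α, funext fun idx => ?_⟩
        fin_cases idx
        · show (P k).2.rep 0 = -((P k).2.rep 1) / α * β
          rw [div_mul_eq_mul_div, eq_div_iff hα]
          linear_combination hlin
        · show (P k).2.rep 1 = -((P k).2.rep 1) / α * (-α)
          rw [neg_div, neg_mul_neg, div_mul_cancel₀ _ hα]
    obtain ⟨t, htv⟩ := hbtv
    have ht0 : t ≠ 0 := by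
      intro h
      apply hbk
      rw [htv, h, zero_smul]
    conv_lhs => rw [← Projectivization.mk_rep (P k).2]
    rw [Projectivization.mk_eq_mk_iff]
    exact ⟨Units.mk0 t ht0, by rw [Units.smul_def]; simpa using htv.symm⟩
  funext i
  simp only [Pi.zero_apply]
  by_contra hi0
  obtain ⟨m0, hm0⟩ : ∃ m, (P i).2.rep m ≠ 0 := by
    by_contra h
    push_neg at h
    exact (P i).2.rep_nonzero (funext fun m => h m)
  by_cases hj : ∃ j, j ≠ i ∧ lam j ≠ 0
  · obtain ⟨j, hji, hj0⟩ := hj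
    have hQi := hproj i hi0
    have hQj := hproj j hj0
    have hbij : (P j).2.rep = (P i).2.rep :=
      congrArg Projectivization.rep (hQj.trans hQi.symm)
    have hothers : ∀ k, k ≠ i → k ≠ j → lam k = 0 := by
      intro k hki hkj
      by_contra hk0
      have hsub : ({i, j, k} : Set (Fin 5)) ⊆
          {m | (P m).2 = Projectivization.mk ℂ v hv} := by
        rintro m (rfl | rfl | rfl)
        · exact hQi
        · exact hQj
        · exact hproj m hk0
      have h3 : ({i, j, k} : Set (Fin 5)).ncard = 3 := by
        rw [Set.ncard_insert_of_notMem (by simp [Ne.symm hji, Ne.symm hki]) (Set.toFinite _),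
          Set.ncard_insert_of_notMem (by simp [Ne.symm hkj]) (Set.toFinite _),
          Set.ncard_singleton]
      have hle := Set.ncard_le_ncard hsub (Set.toFinite _)
      have h2b := hgen.2.2.1 (Projectivization.mk ℂ v hv)
      omega
    have hij2 : ∀ (ε m n : Fin 2),
        lam i * ((P i).1.rep ε * ((P i).2.rep m * (P i).2.rep n))
          + lam j * ((P j).1.rep ε * ((P j).2.rep m * (P j).2.rep n)) = 0 := by
      intro ε m n
      have h := Hs ε m n
      rw [← Finset.sum_subset (Finset.subset_univ ({i, j} : Finset (Fin 5))) ?_] at h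
      · rwa [Finset.sum_pair (Ne.symm hji)] at h
      · intro k _ hk
        simp only [Finset.mem_insert, Finset.mem_singleton] at hk
        push_neg at hk
        rw [hothers k hk.1 hk.2]
        ring
    have hA : ∀ ε, lam i * (P i).1.rep ε + lam j * (P j).1.rep ε = 0 := by
      intro ε
      have h := hij2 ε m0 m0
      rw [hbij] at h
      have h2 : (lam i * (P i).1.rep ε + lam j * (P j).1.rep ε)
          * ((P i).2.rep m0 * (P i).2.rep m0) = 0 := by linear_combination h
      rcases mul_eq_zero.mp h2 with h3 | h3
      · exact h3
      · exact absurd h3 (mul_ne_zero hm0 hm0)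
    set c : ℂ := -(lam i) / lam j with hc
    have hc0 : c ≠ 0 := by
      rw [hc, div_ne_zero_iff, neg_ne_zero]
      exact ⟨hi0, hj0⟩
    have haj : (P j).1.rep = c • (P i).1.rep := by
      funext ε
      have h := hA ε
      simp only [Pi.smul_apply, smul_eq_mul, hc]
      field_simp
      linear_combination h
    have h1eq : (P j).1 = (P i).1 := by
      conv_lhs => rw [← Projectivization.mk_rep (P j).1]
      conv_rhs => rw [← Projectivization.mk_rep (P i).1]
      rw [Projectivization.mk_eq_mk_iff]
      exact ⟨Units.mk0 c hc0, by rw [Units.smul_def]; exact haj.symm⟩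
    have hPeq : P j = P i := Prod.ext h1eq (hQj.trans hQi.symm)
    exact hji (hgen.1 hPeq)
  · push_neg at hj
    obtain ⟨ε0, hε0⟩ : ∃ ε, (P i).1.rep ε ≠ 0 := by
      by_contra h
      push_neg at h
      exact (P i).1.rep_nonzero (funext fun ε => h ε)
    have hsingle := Hs ε0 m0 m0
    rw [Finset.sum_eq_single i (fun k _ hk => by rw [hj k hk]; ring) (by simp)] at hsingle
    exact absurd hsingle
      (mul_ne_zero hi0 (mul_ne_zero hε0 (mul_ne_zero hm0 hm0)))

end Aux

set_option maxHeartbeats 1000000 in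
set_option synthInstance.maxHeartbeats 400000 in
theorem dim_bidegree_one_two_through_five_points (P : Fin 5 → P1C × P1C)
    (hgen : GenPosP1P1 P) :
    Module.finrank ℂ ↥(biVanish 1 2 (Set.range P)) = 1 := by
  classical
  set E : ↥W12 →ₗ[ℂ] (Fin 5 → ℂ) :=
    LinearMap.pi (fun i => (evalLin (pairRep (P i))).comp W12.subtype) with hE
  have hle : biVanish 1 2 (Set.range P) ≤ W12 := inf_le_left
  have hcomap : Submodule.comap W12.subtype (biVanish 1 2 (Set.range P))
      = LinearMap.ker E := by
    ext x
    simp only [Submodule.mem_comap, Submodule.coe_subtype, biVanish, Submodule.mem_inf,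
      Submodule.mem_iInf, LinearMap.mem_ker, Set.mem_range]
    constructor
    · rintro ⟨-, h⟩
      funext i
      simpa [hE, evalLin] using h (P i) ⟨i, rfl⟩
    · intro h
      refine ⟨x.2, ?_⟩
      rintro Q ⟨i, rfl⟩
      have h2 := congrFun h i
      simpa [hE, evalLin] using h2
  have e1 : Module.finrank ℂ ↥(LinearMap.ker E)
      = Module.finrank ℂ ↥(biVanish 1 2 (Set.range P)) := by
    rw [← hcomap]
    exact (Submodule.comapSubtypeEquivOfLe hle).finrank_eq
  have hmon : ∀ (ε : Fin 2) (j : Fin 3), (monomial (expo ε j) (1:ℂ)) ∈ W12 := fun ε j =>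
    isWeightedHomogeneous_monomial _ _ _ (weight_expo ε j)
  have hsurj : LinearMap.range E = ⊤ := by
    by_contra h
    obtain ⟨f, hf0, hbot⟩ :=
      Submodule.exists_dual_map_eq_bot_of_lt_top (lt_top_iff_ne_top.2 h) inferInstance
    set lam : Fin 5 → ℂ := fun i => f (fun k => if i = k then 1 else 0) with hlam
    have hvan : ∀ (ε : Fin 2) (j : Fin 3), ∑ i, lam i * rowv (P i) ε j = 0 := by
      intro ε j
      have hmem : E ⟨monomial (expo ε j) 1, hmon ε j⟩ ∈ LinearMap.range E := ⟨_, rfl⟩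
      have h0 : f (E ⟨monomial (expo ε j) 1, hmon ε j⟩) = 0 := by
        have h2 := Submodule.mem_map_of_mem (f := f) hmem
        rw [hbot] at h2
        simpa using h2
      rw [LinearMap.pi_apply_eq_sum_univ f] at h0
      refine Eq.trans (Finset.sum_congr rfl fun i _ => ?_) h0
      have hEi : (E ⟨monomial (expo ε j) 1, hmon ε j⟩) i = rowv (P i) ε j := by
        simp only [hE, LinearMap.pi_apply, LinearMap.comp_apply, Submodule.coe_subtype]
        show aeval (pairRep (P i)) (monomial (expo ε j) (1:ℂ)) = _
        rw [aeval_eq_eval, eval_expo_monomial]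
      rw [hEi, smul_eq_mul, mul_comm]
    have hz := lam_zero P hgen lam hvan
    apply hf0
    apply LinearMap.ext
    intro y
    have hzz : ∀ i : Fin 5, f (fun k => if i = k then 1 else 0) = 0 :=
      fun i => congrFun hz i
    rw [LinearMap.pi_apply_eq_sum_univ f y]
    simp [hzz]
  have hrn := LinearMap.finrank_range_add_finrank_ker E
  rw [hsurj, finrank_top, finrank_W12] at hrn
  have h5 : Module.finrank ℂ (Fin 5 → ℂ) = 5 := by simp
  rw [h5] at hrn
  rw [← e1]
  omega
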